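/- The coefficient of ∏_{i,j=1}^n X_{ij} in det(X)^n equals ∑_{(σ₁,...,σₙ)} ∏ᵢ sign(σᵢ), where the sum ranges over tuples of permutations of {1,...,n} whose permutation matrices sum to the all-ones matrix (i.e., Latin squares of order n). -/

import Mathlib

open Finset

/-- A Latin square of order `n`, viewed as a tuple `(σ₁, …, σₙ)` of permutations whose
permutation matrices sum to the all-ones matrix: for every cell `(i,j)` there is exactly
one `m` with `σₘ i = j`. -/
def IsLatin {n : ℕ} (σ : Fin n → Equiv.Perm (Fin n)) : Prop :=
  ∀ i j : Fin n, (Finset.univ.filter fun m => σ m i = j).card = 1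

instance {n : ℕ} : DecidablePred (IsLatin (n := n)) := fun σ => by
  unfold IsLatin; infer_instance

/-- The finite set of Latin squares of order `n`. -/
def latinSquares (n : ℕ) : Finset (Fin n → Equiv.Perm (Fin n)) :=
  Finset.univ.filter IsLatin

/-- The sign of a Latin square: `(-1)^(n(n-1)/2) ∏ᵢ sign σᵢ`. -/
def signLS {n : ℕ} (σ : Fin n → Equiv.Perm (Fin n)) : ℤˣ :=
  (-1) ^ (n * (n - 1) / 2) * ∏ i, Equiv.Perm.sign (σ i)

/-- The number of even Latin squares of order `n`. -/
def Leven (n : ℕ) : ℕ := ((latinSquares n).filter fun σ => signLS σ = 1).card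

/-- The number of odd Latin squares of order `n`. -/
def Lodd (n : ℕ) : ℕ := ((latinSquares n).filter fun σ => signLS σ = -1).card

open MvPolynomial

/-- The determinant of the `n × n` matrix of indeterminates `X = (X_{ij})`, as a
multivariate polynomial with integer coefficients. -/
noncomputable def detX (n : ℕ) : MvPolynomial (Fin n × Fin n) ℤ :=
  Matrix.det (Matrix.of fun i j => (X (i, j) : MvPolynomial (Fin n × Fin n) ℤ))

/-- The all-ones multiindex, i.e. the exponent vector of the monomial `∏_{i,j} X_{ij}`. -/
noncomputable def allOnes (n : ℕ) : (Fin n × Fin n) →₀ ℕ :=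
  Finsupp.equivFunOnFinite.symm fun _ => 1

/-- `α! := ∏ (α_{ij})!` for a multiindex `α`. -/
def mfact {σ : Type*} (α : σ →₀ ℕ) : ℕ := α.prod fun _ m => m.factorial

private lemma prod_monomial' {σ' : Type*} {ι : Type*} (s : Finset ι)
    (e : ι → (σ' →₀ ℕ)) (c : ι → ℤ) :
    ∏ i ∈ s, MvPolynomial.monomial (e i) (c i) =
      MvPolynomial.monomial (∑ i ∈ s, e i) (∏ i ∈ s, c i) := by
  classical
  induction s using Finset.cons_induction with
  | empty => simp [MvPolynomial.monomial_zero']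
  | cons a s ha ih =>
      rw [Finset.prod_cons, ih, Finset.sum_cons, Finset.prod_cons,
        MvPolynomial.monomial_mul]

private lemma detX_eq (n : ℕ) : detX n = ∑ τ : Equiv.Perm (Fin n),
    MvPolynomial.monomial (∑ i, Finsupp.single (τ i, i) (1 : ℕ))
      ((Equiv.Perm.sign τ : ℤ)) := by
  rw [detX, Matrix.det_apply']
  refine Finset.sum_congr rfl fun τ _ => ?_
  rw [show (∏ i, (Matrix.of fun i j => (X (i, j) : MvPolynomial (Fin n × Fin n) ℤ)) (τ i) i)
      = ∏ i : Fin n, MvPolynomial.monomial (Finsupp.single (τ i, i) 1) (1 : ℤ) from rfl,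
    prod_monomial']
  rw [show ((((Equiv.Perm.sign τ : ℤ)) : MvPolynomial (Fin n × Fin n) ℤ))
      = MvPolynomial.C ((Equiv.Perm.sign τ : ℤ)) by simp,
    MvPolynomial.C_mul_monomial]
  simp

/-- The coefficient of `∏_{i,j} X_{ij}` in `det(X)^n` equals the sum of `∏ᵢ sign σᵢ` over
all Latin squares `(σ₁, …, σₙ)` of order `n`. -/
theorem coeff_allOnes_det_pow (n : ℕ) :
    MvPolynomial.coeff (allOnes n) ((detX n) ^ n) =
      ∑ σ ∈ latinSquares n, ∏ i, ((Equiv.Perm.sign (σ i) : ℤˣ) : ℤ) := by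
  classical
  rw [detX_eq, Fintype.sum_pow]
  simp only [prod_monomial', MvPolynomial.coeff_sum, MvPolynomial.coeff_monomial]
  rw [← Finset.sum_filter]
  refine Finset.sum_congr ?_ fun _ _ => rfl
  ext p
  simp only [latinSquares, Finset.mem_filter, Finset.mem_univ, true_and]
  have hval : ∀ (i j : Fin n),
      (∑ m : Fin n, ∑ i' : Fin n, Finsupp.single ((p m) i', i') (1 : ℕ)) (i, j)
        = (Finset.univ.filter fun m => p m j = i).card := by
    intro i j
    rw [Finsupp.finset_sum_apply]
    have h1 : ∀ m : Fin n,
        (∑ i' : Fin n, Finsupp.single ((p m) i', i') (1 : ℕ)) (i, j)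
          = if p m j = i then 1 else 0 := by
      intro m
      rw [Finsupp.finset_sum_apply]
      rw [Finset.sum_congr rfl (fun i' _ => show (Finsupp.single ((p m) i', i') (1:ℕ)) (i,j)
          = if i' = j then (if p m i' = i then 1 else 0) else 0 by
        rw [Finsupp.single_apply]
        by_cases h : i' = j <;> by_cases h2 : p m i' = i <;>
          simp [h, h2, Prod.ext_iff])]
      rw [Finset.sum_ite_eq' Finset.univ j]
      simp
    rw [Finset.sum_congr rfl fun m _ => h1 m]
    rw [Finset.card_filter]
  have hall : ∀ i j : Fin n, (allOnes n) (i, j) = 1 := fun i j => rfl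
  constructor
  · intro h i j
    have := hval j i
    rw [h, hall] at this
    exact this.symm
  · intro h
    ext ⟨i, j⟩
    rw [hval i j, hall, h j i]
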